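/- In the single-buffer simulation game, if Duplicator has a winning strategy in the variant where she may consume any number of letters per round, then she also has a winning strategy in which she consumes at most one letter per round. -/

import Mathlib

open scoped Classical

/-- A Büchi automaton over alphabet `S`. -/
structure BA (S : Type) where
  Q : Type
  init : Q
  trans : Q → S → Q → Prop
  acc : Q → Prop

/-- The Büchi language of `A`: infinite words with a run from the initial state
visiting accepting states infinitely often. -/
def BA.Lang {S : Type} (A : BA S) : Set (ℕ → S) :=
  { w | ∃ ρ : ℕ → A.Q, ρ 0 = A.init ∧ (∀ n, A.trans (ρ n) (w n) (ρ (n+1))) ∧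
        ∀ n, ∃ m, n ≤ m ∧ A.acc (ρ m) }

/-- Single-buffer game: the configuration after Spoiler's move `(a, q')`:
 `a` is appended to the buffer. -/
def midCfg1 {S : Type} {QA QB : Type} (c : QA × List S × QB) (m : S × QA) :
    QA × List S × QB :=
  (m.2, c.2.1 ++ [m.1], c.2.2)

/-- Duplicator's move in the single-buffer game: skip (`none`) or consume the oldest
buffered letter along a matching transition to state `p'` (`some p'`). -/
noncomputable def dupApply1 {S : Type} (A B : BA S) :
    (A.Q × List S × B.Q) → Option B.Q → Option (A.Q × List S × B.Q)
  | c, none => some c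
  | c, some p' =>
    match c.2.1 with
    | [] => none
    | b :: γ => if B.trans c.2.2 b p' then some (c.1, γ, p') else none

/-- The configuration at the start of round `n` of the single-buffer game. -/
noncomputable def playCfg1 {S : Type} (A B : BA S)
    (sp : ℕ → S × A.Q) (dm : ℕ → Option B.Q) : ℕ → Option (A.Q × List S × B.Q)
  | 0 => some (A.init, [], B.init)
  | n+1 =>
    match playCfg1 A B sp dm n with
    | none => none
    | some c =>
      if A.trans c.1 (sp n).1 (sp n).2 then dupApply1 A B (midCfg1 c (sp n)) (dm n) else none

/-- Duplicator's winning condition for the single-buffer game with capacity `k`: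
the buffer never exceeds `k` (checked after her moves), and either Spoiler's run is
non-accepting, or Duplicator moves infinitely often and her run visits accepting
states infinitely often. -/
def Win1 {S : Type} (A B : BA S) (k : ℕ∞)
    (sp : ℕ → S × A.Q) (dm : ℕ → Option B.Q) : Prop :=
  (∀ n c, playCfg1 A B sp dm n = some c → (c.2.1.length : ℕ∞) ≤ k) ∧
  ((∃ N, ∀ n, N ≤ n → ¬ A.acc (sp n).2) ∨
    ((∀ n, ∃ m, n ≤ m ∧ dm m ≠ none) ∧ (∀ n, ∃ m, n ≤ m ∧ ∃ p ∈ dm m, B.acc p)))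

/-- Single-buffer simulation `A ⊑k B`: Duplicator has a winning strategy in the
single-buffer simulation game with buffer capacity `k` (`k = ⊤` is the unbounded
buffer). -/
def Sim1 {S : Type} (A B : BA S) (k : ℕ∞) : Prop :=
  ∃ dstrat : List ((S × A.Q) × Option B.Q) → (S × A.Q) → Option B.Q,
    ∀ sp dm, (∀ n, dm n = dstrat (List.ofFn fun i : Fin n => (sp i, dm i)) (sp n)) →
      (∀ n c, playCfg1 A B sp dm n = some c → A.trans c.1 (sp n).1 (sp n).2) →
      (∀ n, (playCfg1 A B sp dm n).isSome) ∧ Win1 A B k sp dm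
/-- Duplicator consumes a finite sequence of letters from the head of the single
buffer, along matching transitions given by the listed successor states. -/
noncomputable def dupApply1M {S : Type} (A B : BA S) :
    (A.Q × List S × B.Q) → List B.Q → Option (A.Q × List S × B.Q)
  | c, [] => some c
  | c, p' :: ps =>
    match c.2.1 with
    | [] => none
    | b :: γ =>
      if B.trans c.2.2 b p' then dupApply1M A B (c.1, γ, p') ps else none

/-- Configurations of the single-buffer game in the variant where Duplicator may
consume any number of letters per round. -/
noncomputable def playCfg1M {S : Type} (A B : BA S)
    (sp : ℕ → S × A.Q) (dm : ℕ → List B.Q) : ℕ → Option (A.Q × List S × B.Q)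
  | 0 => some (A.init, [], B.init)
  | n+1 =>
    match playCfg1M A B sp dm n with
    | none => none
    | some c =>
      if A.trans c.1 (sp n).1 (sp n).2 then dupApply1M A B (midCfg1 c (sp n)) (dm n) else none

/-- Single-buffer simulation in the variant where Duplicator may consume any number
of letters per round. -/
def Sim1M {S : Type} (A B : BA S) (k : ℕ∞) : Prop :=
  ∃ dstrat : List ((S × A.Q) × List B.Q) → (S × A.Q) → List B.Q,
    ∀ sp dm, (∀ n, dm n = dstrat (List.ofFn fun i : Fin n => (sp i, dm i)) (sp n)) →
      (∀ n c, playCfg1M A B sp dm n = some c → A.trans c.1 (sp n).1 (sp n).2) →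
      (∀ n, (playCfg1M A B sp dm n).isSome) ∧
      ((∀ n c, playCfg1M A B sp dm n = some c → (c.2.1.length : ℕ∞) ≤ k) ∧
       ((∃ N, ∀ n, N ≤ n → ¬ A.acc (sp n).2) ∨
         ((∀ n, ∃ m, n ≤ m ∧ dm m ≠ []) ∧ (∀ n, ∃ m, n ≤ m ∧ ∃ p ∈ dm m, B.acc p))))


/-! ### Auxiliary machinery for Statement 14 -/

section AuxSim1

variable {S : Type} (A B : BA S)

lemma dupApply1M_nil (c : A.Q × List S × B.Q) : dupApply1M A B c [] = some c := rfl

lemma dupApply1M_cons_nil (a : A.Q) (p q : B.Q) (Q : List B.Q) :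
    dupApply1M A B (a, [], p) (q :: Q) = none := rfl

lemma dupApply1M_cons (a : A.Q) (b : S) (γ : List S) (p q : B.Q) (Q : List B.Q) :
    dupApply1M A B (a, b :: γ, p) (q :: Q)
      = if B.trans p b q then dupApply1M A B (a, γ, q) Q else none := rfl

lemma dupApply1_none' (c : A.Q × List S × B.Q) : dupApply1 A B c none = some c := rfl

lemma dupApply1_some_nil (a : A.Q) (p q : B.Q) :
    dupApply1 A B (a, ([] : List S), p) (some q) = none := rfl

lemma dupApply1_some_cons (a : A.Q) (b : S) (γ : List S) (p q : B.Q) :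
    dupApply1 A B (a, b :: γ, p) (some q)
      = if B.trans p b q then some (a, γ, q) else none := rfl

/-- Reconstruct Spoiler's moves from a history. -/
def extSp {α β : Type*} (hst : List (α × β)) (m : α) : ℕ → α :=
  fun i => if h : i < hst.length then (hst[i]'h).1 else m

/-- The history of the simulated multi-consumption play. -/
noncomputable def mHist (ds : List ((S × A.Q) × List B.Q) → (S × A.Q) → List B.Q)
    (sp : ℕ → S × A.Q) : ℕ → List ((S × A.Q) × List B.Q)
  | 0 => []
  | n+1 => mHist ds sp n ++ [(sp n, ds (mHist ds sp n) (sp n))]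

/-- The moves of the simulated multi-consumption strategy. -/
noncomputable def mMov (ds : List ((S × A.Q) × List B.Q) → (S × A.Q) → List B.Q)
    (sp : ℕ → S × A.Q) (n : ℕ) : List B.Q :=
  ds (mHist A B ds sp n) (sp n)

/-- The queue of pending (already planned, not yet performed) moves. -/
noncomputable def mQueue (ds : List ((S × A.Q) × List B.Q) → (S × A.Q) → List B.Q)
    (sp : ℕ → S × A.Q) : ℕ → List B.Q
  | 0 => []
  | n+1 => (mQueue ds sp n ++ mMov A B ds sp n).tail

lemma mHist_ofFn (ds : List ((S × A.Q) × List B.Q) → (S × A.Q) → List B.Q)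
    (sp : ℕ → S × A.Q) : ∀ n, mHist A B ds sp n
      = List.ofFn (fun i : Fin n => (sp i, mMov A B ds sp i)) := by
  intro n
  induction n with
  | zero => rfl
  | succ n ih =>
    rw [mHist, ih, List.ofFn_succ']
    simp [mMov, ih, List.concat_eq_append]

lemma mHist_congr (ds : List ((S × A.Q) × List B.Q) → (S × A.Q) → List B.Q)
    (sp sp' : ℕ → S × A.Q) : ∀ n, (∀ i, i < n → sp i = sp' i) →
      mHist A B ds sp n = mHist A B ds sp' n := by
  intro n
  induction n with
  | zero => intro _; rfl
  | succ n ih =>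
    intro hag
    rw [mHist, mHist, ih (fun i hi => hag i (Nat.lt_succ_of_lt hi)),
      hag n (Nat.lt_succ_self n)]

lemma mMov_congr (ds : List ((S × A.Q) × List B.Q) → (S × A.Q) → List B.Q)
    (sp sp' : ℕ → S × A.Q) (n : ℕ) (hag : ∀ i, i ≤ n → sp i = sp' i) :
    mMov A B ds sp n = mMov A B ds sp' n := by
  unfold mMov
  rw [mHist_congr A B ds sp sp' n (fun i hi => hag i (le_of_lt hi)), hag n le_rfl]

lemma mQueue_congr (ds : List ((S × A.Q) × List B.Q) → (S × A.Q) → List B.Q)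
    (sp sp' : ℕ → S × A.Q) : ∀ n, (∀ i, i < n → sp i = sp' i) →
      mQueue A B ds sp n = mQueue A B ds sp' n := by
  intro n
  induction n with
  | zero => intro _; rfl
  | succ n ih =>
    intro hag
    rw [mQueue, mQueue, ih (fun i hi => hag i (Nat.lt_succ_of_lt hi)),
      mMov_congr A B ds sp sp' n (fun i hi => hag i (Nat.lt_succ_of_le hi))]

lemma dupApply1M_fst : ∀ (Q : List B.Q) (c r : A.Q × List S × B.Q),
    dupApply1M A B c Q = some r → r.1 = c.1 := by
  intro Q
  induction Q with
  | nil =>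
    rintro c r h
    simp only [dupApply1M] at h
    cases h; rfl
  | cons q Q ih =>
    rintro ⟨a, w, p⟩ r h
    cases w with
    | nil => rw [dupApply1M_cons_nil] at h; cases h
    | cons b γ =>
      rw [dupApply1M_cons] at h
      split at h
      · exact ih (a, γ, q) r h
      · cases h

lemma dupApply1M_append (a y : A.Q) (b : S) :
    ∀ (Q : List B.Q) (w : List S) (p : B.Q) (γ : List S) (p' : B.Q),
    dupApply1M A B (a, w, p) Q = some (a, γ, p') →
    dupApply1M A B (y, w ++ [b], p) Q = some (y, γ ++ [b], p') := by
  intro Q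
  induction Q with
  | nil =>
    intro w p γ p' h
    rw [dupApply1M_nil] at h
    cases h
    rw [dupApply1M_nil]
  | cons q Q ih =>
    intro w p γ p' h
    cases w with
    | nil => rw [dupApply1M_cons_nil] at h; cases h
    | cons b0 w' =>
      rw [dupApply1M_cons] at h
      rw [List.cons_append, dupApply1M_cons]
      split at h
      · rename_i htr
        rw [if_pos htr]
        exact ih w' q γ p' h
      · cases h

lemma dupApply1M_comp : ∀ (Q1 : List B.Q) (c c' : A.Q × List S × B.Q)
    (Q2 : List B.Q) (r : Option (A.Q × List S × B.Q)),
    dupApply1M A B c Q1 = some c' → dupApply1M A B c' Q2 = r →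
    dupApply1M A B c (Q1 ++ Q2) = r := by
  intro Q1
  induction Q1 with
  | nil =>
    rintro c c' Q2 r h1 h2
    rw [dupApply1M_nil] at h1
    cases h1
    simpa using h2
  | cons q Q ih =>
    rintro ⟨a, w, p⟩ c' Q2 r h1 h2
    cases w with
    | nil => rw [dupApply1M_cons_nil] at h1; cases h1
    | cons b0 w' =>
      rw [dupApply1M_cons] at h1
      rw [List.cons_append, dupApply1M_cons]
      split at h1
      · rename_i htr
        rw [if_pos htr]
        exact ih _ _ _ _ h1 h2
      · cases h1

/-- The coupling invariant between the one-letter play and the simulated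
multi-consumption play. -/
def SimInv (sp : ℕ → S × A.Q) (dm : ℕ → Option B.Q) (dmm : ℕ → List B.Q)
    (Qu : ℕ → List B.Q) (n : ℕ) : Prop :=
  ∃ a w p γ p', playCfg1 A B sp dm n = some (a, w, p) ∧
    playCfg1M A B sp dmm n = some (a, γ, p') ∧
    dupApply1M A B (a, w, p) (Qu n) = some (a, γ, p')

lemma playCfg1M_succ_elim (sp : ℕ → S × A.Q) (dmm : ℕ → List B.Q) (n : ℕ)
    (c' : A.Q × List S × B.Q) (h : playCfg1M A B sp dmm (n+1) = some c') :
    ∃ c, playCfg1M A B sp dmm n = some c ∧ A.trans c.1 (sp n).1 (sp n).2 ∧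
      dupApply1M A B (midCfg1 c (sp n)) (dmm n) = some c' := by
  rw [playCfg1M] at h
  cases hc : playCfg1M A B sp dmm n with
  | none => rw [hc] at h; cases h
  | some c =>
    rw [hc] at h
    simp only at h
    split at h
    · exact ⟨c, rfl, by assumption, h⟩
    · cases h

lemma master (sp : ℕ → S × A.Q) (dm : ℕ → Option B.Q) (dmm : ℕ → List B.Q)
    (Qu : ℕ → List B.Q)
    (hsp1 : ∀ n c, playCfg1 A B sp dm n = some c → A.trans c.1 (sp n).1 (sp n).2)
    (hdm : ∀ n, dm n = (Qu n ++ dmm n).head?)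
    (hQ0 : Qu 0 = [])
    (hQs : ∀ n, Qu (n+1) = (Qu n ++ dmm n).tail) :
    ∀ n, (playCfg1M A B sp dmm n).isSome → SimInv A B sp dm dmm Qu n := by
  intro n
  induction n with
  | zero =>
    intro _
    exact ⟨A.init, [], B.init, [], B.init, rfl, rfl, by rw [hQ0]; rfl⟩
  | succ n ih =>
    intro hs
    obtain ⟨c', hc'⟩ := Option.isSome_iff_exists.mp hs
    obtain ⟨cM, hcM, htrM, hstep⟩ := playCfg1M_succ_elim A B sp dmm n c' hc'
    obtain ⟨a, w, p, γ, p', h1, hM, hch⟩ := ih (by rw [hcM]; rfl)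
    rw [hM] at hcM
    cases hcM
    set b := (sp n).1 with hb
    set a' := (sp n).2 with ha'
    have htr : A.trans a (sp n).1 (sp n).2 := hsp1 n _ h1
    have hmid : midCfg1 (a, γ, p') (sp n) = (a', γ ++ [b], p') := rfl
    rw [hmid] at hstep
    have hlift := dupApply1M_append A B a a' b (Qu n) w p γ p' hch
    have hcomp := dupApply1M_comp A B (Qu n) (a', w ++ [b], p) (a', γ ++ [b], p')
      (dmm n) (some c') hlift hstep
    have hplay1 : playCfg1 A B sp dm (n+1)
        = dupApply1 A B (a', w ++ [b], p) (dm n) := by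
      rw [playCfg1, h1]
      simp only
      rw [if_pos htr]
      rfl
    cases hQE : Qu n ++ dmm n with
    | nil =>
      rw [hQE] at hcomp
      rw [dupApply1M_nil] at hcomp
      have hc'eq : c' = (a', w ++ [b], p) := by
        cases hcomp; rfl
      have hdmn : dm n = none := by rw [hdm n, hQE]; rfl
      refine ⟨a', w ++ [b], p, w ++ [b], p, ?_, ?_, ?_⟩
      · rw [hplay1, hdmn]; rfl
      · rw [hc', hc'eq]
      · rw [hQs n, hQE]; rfl
    | cons q rest =>
      rw [hQE] at hcomp
      obtain ⟨b0, t, hwb⟩ : ∃ b0 t, w ++ [b] = b0 :: t := by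
        cases w with
        | nil => exact ⟨b, [], rfl⟩
        | cons x xs => exact ⟨x, xs ++ [b], rfl⟩
      rw [hwb] at hcomp
      rw [dupApply1M_cons] at hcomp
      split at hcomp
      · rename_i htrB
        obtain ⟨a2, γ2, p2⟩ := c'
        have ha2 : a2 = a' := by
          have := dupApply1M_fst A B (dmm n) (a', γ ++ [b], p') (a2, γ2, p2) hstep
          simpa using this
        subst ha2
        refine ⟨a', t, q, γ2, p2, ?_, hc', ?_⟩
        · have hdmn : dm n = some q := by rw [hdm n, hQE]; rfl
          rw [hplay1, hdmn, hwb, dupApply1_some_cons, if_pos htrB]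
        · rw [hQs n, hQE]
          exact hcomp
      · cases hcomp

lemma dupApply1_len (c c' : A.Q × List S × B.Q) (q : B.Q)
    (h : dupApply1 A B c (some q) = some c') :
    c'.2.1.length + 1 = c.2.1.length := by
  obtain ⟨a, w, p⟩ := c
  cases w with
  | nil => rw [dupApply1_some_nil] at h; cases h
  | cons b γ =>
    rw [dupApply1_some_cons] at h
    split at h
    · cases h; rfl
    · cases h

lemma playCfg1_succ_elim (sp : ℕ → S × A.Q) (dm : ℕ → Option B.Q) (n : ℕ)
    (c' : A.Q × List S × B.Q) (h : playCfg1 A B sp dm (n+1) = some c') :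
    ∃ c, playCfg1 A B sp dm n = some c ∧
      dupApply1 A B (midCfg1 c (sp n)) (dm n) = some c' := by
  rw [playCfg1] at h
  cases hc : playCfg1 A B sp dm n with
  | none => rw [hc] at h; cases h
  | some c =>
    rw [hc] at h
    simp only at h
    split at h
    · exact ⟨c, rfl, h⟩
    · cases h

lemma cap (sp : ℕ → S × A.Q) (dm : ℕ → Option B.Q) (dmm : ℕ → List B.Q)
    (Qu : ℕ → List B.Q)
    (hsp1 : ∀ n c, playCfg1 A B sp dm n = some c → A.trans c.1 (sp n).1 (sp n).2)
    (hdm : ∀ n, dm n = (Qu n ++ dmm n).head?)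
    (hQ0 : Qu 0 = [])
    (hQs : ∀ n, Qu (n+1) = (Qu n ++ dmm n).tail)
    (hall : ∀ n, (playCfg1M A B sp dmm n).isSome) :
    ∀ n, ∃ t, t ≤ n ∧ ∀ a w p a' γ p', playCfg1 A B sp dm n = some (a, w, p) →
      playCfg1M A B sp dmm t = some (a', γ, p') → w.length = γ.length := by
  intro n
  induction n with
  | zero =>
    refine ⟨0, le_rfl, ?_⟩
    intro a w p a' γ p' h1 h2
    have hw : (some (A.init, ([] : List S), B.init) :
        Option (A.Q × List S × B.Q)) = some (a, w, p) := h1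
    have hγ : (some (A.init, ([] : List S), B.init) :
        Option (A.Q × List S × B.Q)) = some (a', γ, p') := h2
    cases hw; cases hγ; rfl
  | succ n ih =>
    by_cases hq : Qu (n+1) = []
    · refine ⟨n+1, le_rfl, ?_⟩
      intro a w p a' γ p' h1 h2
      obtain ⟨a0, w0, p0, γ0, p0', hh1, hh2, hch⟩ :=
        master A B sp dm dmm Qu hsp1 hdm hQ0 hQs (n+1) (hall (n+1))
      rw [hh1] at h1; cases h1
      rw [hh2] at h2; cases h2
      rw [hq, dupApply1M_nil] at hch
      cases hch
      rfl
    · obtain ⟨t, ht, hlen⟩ := ih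
      refine ⟨t, Nat.le_succ_of_le ht, ?_⟩
      intro a w p a' γ p' h1 h2
      have hne : Qu n ++ dmm n ≠ [] := by
        intro hE
        apply hq
        rw [hQs n, hE]
        rfl
      obtain ⟨q, rest, hQE⟩ := List.exists_cons_of_ne_nil hne
      have hdmn : dm n = some q := by rw [hdm n, hQE]; rfl
      obtain ⟨c, hc, hda⟩ := playCfg1_succ_elim A B sp dm n (a, w, p) h1
      obtain ⟨ac, wc, pc⟩ := c
      have hlen1 : w.length + 1 = wc.length + 1 := by
        have := dupApply1_len A B (midCfg1 (ac, wc, pc) (sp n)) (a, w, p) q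
          (by rw [← hdmn]; exact hda)
        simpa [midCfg1] using this
      have hwc : w.length = wc.length := by omega
      rw [hwc]
      exact hlen ac wc pc a' γ p' hc h2

lemma getq (sp : ℕ → S × A.Q) (dm : ℕ → Option B.Q) (dmm : ℕ → List B.Q)
    (Qu : ℕ → List B.Q)
    (hdm : ∀ n, dm n = (Qu n ++ dmm n).head?)
    (hQs : ∀ n, Qu (n+1) = (Qu n ++ dmm n).tail) :
    ∀ (j n : ℕ) (p : B.Q), (Qu n ++ dmm n)[j]? = some p → dm (n + j) = some p := by
  intro j
  induction j with
  | zero =>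
    intro n p hj
    rw [Nat.add_zero, hdm n]
    rw [← List.head?_eq_getElem?] at hj
    exact hj
  | succ j ih =>
    intro n p hj
    have htail : (Qu n ++ dmm n).tail[j]? = some p := by
      rw [List.getElem?_tail]
      exact hj
    have hlt : j < (Qu n ++ dmm n).tail.length :=
      (List.getElem?_eq_some_iff.mp htail).1
    have hnext : (Qu (n+1) ++ dmm (n+1))[j]? = some p := by
      rw [hQs n, List.getElem?_append_left hlt]
      exact htail
    have := ih (n+1) p hnext
    rw [show n + (j + 1) = n + 1 + j by omega]
    exact this

end AuxSim1

/-- In the single-buffer simulation game, if Duplicator wins the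
variant in which she may consume any number of letters per round, then she also wins
the standard game in which she consumes at most one letter per round. -/
theorem sim1_multi_consumption_no_extra_power {S : Type} (A B : BA S) (k : ℕ∞)
    (h : Sim1M A B k) : Sim1 A B k := by
  obtain ⟨ds, hds⟩ := h
  refine ⟨fun hst m =>
    (mQueue A B ds (extSp hst m) hst.length
      ++ mMov A B ds (extSp hst m) hst.length).head?, ?_⟩
  intro sp dm hdm hsp1
  set dmm : ℕ → List B.Q := mMov A B ds sp with hdmm
  set Qu : ℕ → List B.Q := mQueue A B ds sp with hQu
  have hdm' : ∀ n, dm n = (Qu n ++ dmm n).head? := by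
    intro n
    rw [hdm n]
    beta_reduce
    have hlen : (List.ofFn fun i : Fin n => (sp i, dm i)).length = n :=
      List.length_ofFn
    have hagree : ∀ i, i ≤ n →
        extSp (List.ofFn fun i : Fin n => (sp i, dm i)) (sp n) i = sp i := by
      intro i hi
      unfold extSp
      by_cases hlt : i < (List.ofFn fun i : Fin n => (sp i, dm i)).length
      · rw [dif_pos hlt]
        have hi' : i < n := by rw [hlen] at hlt; exact hlt
        simp [List.getElem_ofFn]
      · rw [dif_neg hlt]
        rw [hlen] at hlt
        have : i = n := by omega
        rw [this]
    rw [hlen,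
      mQueue_congr A B ds _ sp n (fun i hi => hagree i (le_of_lt hi)),
      mMov_congr A B ds _ sp n (fun i hi => hagree i hi)]
  have hQ0 : Qu 0 = [] := rfl
  have hQs : ∀ n, Qu (n+1) = (Qu n ++ dmm n).tail := fun n => rfl
  have h1 : ∀ n, dmm n = ds (List.ofFn fun i : Fin n => (sp i, dmm i)) (sp n) := by
    intro n
    show ds (mHist A B ds sp n) (sp n) = _
    rw [mHist_ofFn]
  have h2 : ∀ n c, playCfg1M A B sp dmm n = some c →
      A.trans c.1 (sp n).1 (sp n).2 := by
    intro n c hc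
    obtain ⟨a, w, p, γ, p', hc1, hcM, hch⟩ :=
      master A B sp dm dmm Qu hsp1 hdm' hQ0 hQs n (by rw [hc]; rfl)
    rw [hcM] at hc
    cases hc
    exact hsp1 n (a, w, p) hc1
  obtain ⟨hMsome, hMcap, hMdisj⟩ := hds sp dmm h1 h2
  have hInv : ∀ n, SimInv A B sp dm dmm Qu n := fun n =>
    master A B sp dm dmm Qu hsp1 hdm' hQ0 hQs n (hMsome n)
  have hsome1 : ∀ n, (playCfg1 A B sp dm n).isSome := by
    intro n
    obtain ⟨a, w, p, γ, p', hc1, _, _⟩ := hInv n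
    rw [hc1]
    rfl
  refine ⟨hsome1, ?_, ?_⟩
  · -- capacity
    intro n c hc
    obtain ⟨t, ht, hlen⟩ := cap A B sp dm dmm Qu hsp1 hdm' hQ0 hQs hMsome n
    obtain ⟨a, w, p, γ, p', hc1, _, _⟩ := hInv n
    rw [hc1] at hc
    cases hc
    obtain ⟨at', wt, pt, γt, pt', _, htM, _⟩ := hInv t
    have hl : w.length = γt.length := hlen a w p at' γt pt' hc1 htM
    have hk : ((γt.length : ℕ) : ℕ∞) ≤ k := hMcap t (at', γt, pt') htM
    show ((w.length : ℕ) : ℕ∞) ≤ k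
    rw [hl]
    exact hk
  · -- acceptance / liveness
    rcases hMdisj with hL | ⟨hmv, hacc⟩
    · exact Or.inl hL
    · refine Or.inr ⟨?_, ?_⟩
      · intro n
        obtain ⟨m, hm, hne⟩ := hmv n
        refine ⟨m, hm, ?_⟩
        rw [hdm' m]
        intro hcon
        rw [List.head?_eq_none_iff] at hcon
        exact hne (List.append_eq_nil_iff.mp hcon).2
      · intro n
        obtain ⟨m, hm, p, hp, hap⟩ := hacc n
        have hpmem : p ∈ Qu m ++ dmm m := List.mem_append_right _ hp
        obtain ⟨j, hjlt, hj⟩ := List.mem_iff_getElem.mp hpmem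
        have hj' : (Qu m ++ dmm m)[j]? = some p := by
          rw [List.getElem?_eq_getElem hjlt, hj]
        have hdmj := getq A B sp dm dmm Qu hdm' hQs j m p hj'
        exact ⟨m + j, le_trans hm (Nat.le_add_right _ _), p,
          Option.mem_def.mpr hdmj, hap⟩
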